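/- If i : A → X is a closed inclusion of topological spaces (i.e. a closed embedding) and f : A → Y is continuous, then in the pushout Z = Y ⊔_A X the induced map Y → Z is again a closed embedding. -/

import Mathlib

open CategoryTheory Limits Topology

universe u

namespace PushoutAux

variable {A X Y : TopCat.{u}} (i : A ⟶ X) (f : A ⟶ Y)

/-- The gluing relation on `X ⊕ Y`. -/
def pRel : (X ⊕ Y) → (X ⊕ Y) → Prop
  | .inl x, .inl x' => x = x' ∨ ∃ a a', i a = x ∧ i a' = x' ∧ f a = f a'
  | .inl x, .inr y => ∃ a, i a = x ∧ f a = y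
  | .inr y, .inl x => ∃ a, i a = x ∧ f a = y
  | .inr y, .inr y' => y = y'

lemma pRel_equiv (hinj : Function.Injective i) : Equivalence (pRel i f) := by
  constructor
  · rintro (x | y)
    · exact Or.inl rfl
    · rfl
  · rintro (x | y) (x' | y') h
    · rcases h with h | ⟨a, a', h1, h2, h3⟩
      · exact Or.inl h.symm
      · exact Or.inr ⟨a', a, h2, h1, h3.symm⟩
    · exact h
    · exact h
    · exact h.symm
  · rintro (x | y) (x' | y') (x'' | y'') h h'
    · rcases h with rfl | ⟨a, a', h1, h2, h3⟩
      · exact h'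
      · rcases h' with rfl | ⟨b, b', g1, g2, g3⟩
        · exact Or.inr ⟨a, a', h1, h2, h3⟩
        · obtain rfl : a' = b := hinj (h2.trans g1.symm)
          exact Or.inr ⟨a, b', h1, g2, h3.trans g3⟩
    · rcases h with rfl | ⟨a, a', h1, h2, h3⟩
      · exact h'
      · obtain ⟨b, g1, g2⟩ := h'
        obtain rfl : a' = b := hinj (h2.trans g1.symm)
        exact ⟨a, h1, h3.trans g2⟩
    · obtain ⟨a, h1, h2⟩ := h
      obtain ⟨b, g1, g2⟩ := h'
      exact Or.inr ⟨a, b, h1, g1, h2.trans g2.symm⟩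
    · obtain ⟨a, h1, h2⟩ := h
      exact ⟨a, h1, h2.trans h'⟩
    · obtain ⟨a, h1, h2⟩ := h
      rcases h' with rfl | ⟨b, b', g1, g2, g3⟩
      · exact ⟨a, h1, h2⟩
      · obtain rfl : a = b := hinj (h1.trans g1.symm)
        exact ⟨b', g2, g3.symm.trans h2⟩
    · obtain ⟨a, h1, h2⟩ := h
      obtain ⟨b, g1, g2⟩ := h'
      obtain rfl : a = b := hinj (h1.trans g1.symm)
      exact h2.symm.trans g2
    · exact (show y = y' from h) ▸ h'
    · exact h.trans h'

/-- The setoid for the pushout. -/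
def pSetoid (hinj : Function.Injective i) : Setoid (X ⊕ Y) :=
  ⟨pRel i f, pRel_equiv i f hinj⟩

variable (hinj : Function.Injective i)

/-- Explicit pushout space. -/
def Z0 : TopCat.{u} := TopCat.of (Quotient (pSetoid i f hinj))

/-- Quotient map. -/
def q : C((X ⊕ Y : Type u), Z0 i f hinj) :=
  ⟨Quotient.mk _, continuous_quotient_mk'⟩

def inlZ : X ⟶ Z0 i f hinj := TopCat.ofHom ⟨fun x => q i f hinj (.inl x), by continuity⟩
def inrZ : Y ⟶ Z0 i f hinj := TopCat.ofHom ⟨fun y => q i f hinj (.inr y), by continuity⟩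

lemma comm : i ≫ inlZ i f hinj = f ≫ inrZ i f hinj := by
  ext a
  exact Quotient.sound ⟨a, rfl, rfl⟩

end PushoutAux

namespace PushoutAux

variable {A X Y : TopCat.{u}} (i : A ⟶ X) (f : A ⟶ Y) (hinj : Function.Injective i)

/-- The explicit pushout cocone. -/
def pCocone : PushoutCocone i f :=
  PushoutCocone.mk (inlZ i f hinj) (inrZ i f hinj) (comm i f hinj)

lemma desc_resp (s : PushoutCocone i f) :
    ∀ u v : (X ⊕ Y : Type u), pRel i f u v →
      Sum.elim (⇑s.inl) (⇑s.inr) u = Sum.elim (⇑s.inl) (⇑s.inr) v := by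
  have cond : ∀ a : A, s.inl (i a) = s.inr (f a) := fun a =>
    ConcreteCategory.congr_hom s.condition a
  rintro (x | y) (x' | y') h
  · rcases h with rfl | ⟨a, a', h1, h2, h3⟩
    · rfl
    · subst h1; subst h2
      simp only [Sum.elim_inl, cond, h3]
  · obtain ⟨a, h1, h2⟩ := h
    subst h1; subst h2
    exact cond a
  · obtain ⟨a, h1, h2⟩ := h
    subst h1; subst h2
    exact (cond a).symm
  · exact (show y = y' from h) ▸ rfl

/-- The descent map. -/
def pDesc (s : PushoutCocone i f) : Z0 i f hinj ⟶ s.pt :=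
  TopCat.ofHom ⟨Quotient.lift (Sum.elim (⇑s.inl) (⇑s.inr)) (desc_resp i f s),
    Continuous.quotient_lift (Continuous.sumElim s.inl.hom.continuous s.inr.hom.continuous) _⟩

/-- The explicit cocone is a colimit. -/
def pIsColimit : IsColimit (pCocone i f hinj) := by
  refine PushoutCocone.IsColimit.mk (comm i f hinj) (pDesc i f hinj)
    (fun s => ?_) (fun s => ?_) (fun s m h1 h2 => ?_)
  · ext x; rfl
  · ext y; rfl
  · ext z
    induction z using Quotient.ind with
    | _ w =>
      rcases w with x | y
      · exact ConcreteCategory.congr_hom h1 x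
      · exact ConcreteCategory.congr_hom h2 y

lemma inrZ_isClosedEmbedding (hi : IsClosedEmbedding i) :
    IsClosedEmbedding (inrZ i f hi.injective) := by
  apply IsClosedEmbedding.of_continuous_injective_isClosedMap
    (inrZ i f hi.injective).hom.continuous
  · intro y y' h
    exact Quotient.exact h
  · intro C hC
    have key : IsClosed ((q i f hi.injective) ⁻¹' ((inrZ i f hi.injective) '' C)) := by
      rw [isClosed_sum_iff]
      constructor
      · have : Sum.inl ⁻¹' ((q i f hi.injective) ⁻¹' ((inrZ i f hi.injective) '' C))
            = i '' (f ⁻¹' C) := by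
          ext x
          simp only [Set.mem_preimage, Set.mem_image]
          constructor
          · rintro ⟨y, hyC, hy⟩
            obtain ⟨a, h1, h2⟩ := Quotient.exact hy.symm
            exact ⟨a, by rw [h2]; exact hyC, h1⟩
          · rintro ⟨a, ha, rfl⟩
            refine ⟨f a, ha, ?_⟩
            exact Quotient.sound (show pRel i f (Sum.inr (f a)) (Sum.inl (i a)) from ⟨a, rfl, rfl⟩)
        rw [this]
        exact hi.isClosedMap _ (hC.preimage f.hom.continuous)
      · have : Sum.inr ⁻¹' ((q i f hi.injective) ⁻¹' ((inrZ i f hi.injective) '' C)) = C := by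
          ext y
          simp only [Set.mem_preimage, Set.mem_image]
          constructor
          · rintro ⟨y', hyC, hy⟩
            obtain h := Quotient.exact hy
            exact (show y' = y from h) ▸ hyC
          · intro hy
            exact ⟨y, hy, rfl⟩
        rw [this]
        exact hC
    have hq : IsQuotientMap (q i f hi.injective) := isQuotientMap_quotient_mk'
    rw [← hq.isClosed_preimage] at *
    exact key

end PushoutAux


/-- If `i : A ⟶ X` is a closed embedding of topological spaces and
`f : A ⟶ Y` is continuous, then in the pushout `Z = Y ⊔_A X` the induced map
`Y ⟶ Z` is again a closed embedding. -/
theorem pushout_of_closedEmbedding_isClosedEmbedding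
    {A X Y : TopCat} (i : A ⟶ X) (f : A ⟶ Y)
    (hi : IsClosedEmbedding i) :
    IsClosedEmbedding (pushout.inr i f : Y ⟶ pushout i f) := by
  have hinj := hi.injective
  have hc := PushoutAux.pIsColimit i f hinj
  let e : pushout i f ≅ (PushoutAux.pCocone i f hinj).pt :=
    colimit.isoColimitCocone ⟨_, hc⟩
  have he : pushout.inr i f ≫ e.hom = PushoutAux.inrZ i f hinj := by
    exact colimit.isoColimitCocone_ι_hom ⟨_, hc⟩ WalkingSpan.right
  have hfun : ⇑(pushout.inr i f) =
      ⇑(TopCat.homeoOfIso e).symm ∘ ⇑(PushoutAux.inrZ i f hinj) := by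
    funext y
    show pushout.inr i f y = e.inv (PushoutAux.inrZ i f hinj y)
    rw [← he]
    exact (ConcreteCategory.congr_hom e.hom_inv_id ((pushout.inr i f) y)).symm
  rw [hfun]
  exact (TopCat.homeoOfIso e).symm.isClosedEmbedding.comp
    (PushoutAux.inrZ_isClosedEmbedding i f hi)
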